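/- arXiv:1311.3308 — 2 statements merged into one kernel-verified Lean document; each statement's English description precedes it below -/
import Mathlib

section
/- For every real u and every real ρ, the Gaussian tail function satisfies ∫_{u-ρ}^∞ φ(t) dt = ∫_u^∞ φ(t) dt + Σ_{j=1}^∞ (ρ^j / j!) · H_{j-1}(u) · φ(u), where the series on the right converges absolutely. -/
open MeasureTheory Set

/-- The standard Gaussian density `φ(x) = (2π)^{-1/2} e^{-x²/2}`. -/
noncomputable def gaussianDensity (x : ℝ) : ℝ :=
  (Real.sqrt (2 * Real.pi))⁻¹ * Real.exp (-x ^ 2 / 2)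

namespace GaussianTubeAux

open Polynomial Finset
open scoped Nat

lemma hasSum_exp_div (x : ℝ) : HasSum (fun n : ℕ => x ^ n / n !) (Real.exp x) := by
  have h := (Real.summable_pow_div_factorial x).hasSum
  have : ∑' n : ℕ, x ^ n / n ! = Real.exp x := by
    rw [Real.exp_eq_exp_ℝ, NormedSpace.exp_eq_tsum_div]
  rwa [this] at h

/-- Terms of the series of `exp (-t²/2)` spread over the even indices. -/
noncomputable def gcoef (t : ℝ) (m : ℕ) : ℝ :=
  if Even m then (-t ^ 2 / 2) ^ (m / 2) / (m / 2)! else 0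

lemma gcoef_even (t : ℝ) (b : ℕ) : gcoef t (2 * b) = (-t ^ 2 / 2) ^ b / b ! := by
  simp [gcoef, Nat.mul_div_cancel_left b (by norm_num : 0 < 2)]

lemma gcoef_odd (t : ℝ) (b : ℕ) : gcoef t (2 * b + 1) = 0 := by
  simp [gcoef, Nat.even_add_one, parity_simps]

lemma hasSum_gcoef (t : ℝ) : HasSum (gcoef t) (Real.exp (-t ^ 2 / 2)) := by
  have he : HasSum (fun b => gcoef t (2 * b)) (Real.exp (-t ^ 2 / 2)) := by
    simpa [gcoef_even] using hasSum_exp_div (-t ^ 2 / 2)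
  have ho : HasSum (fun b => gcoef t (2 * b + 1)) 0 := by
    simpa [gcoef_odd] using (hasSum_zero : HasSum (fun _ : ℕ => (0:ℝ)) 0)
  simpa using he.even_add_odd ho

lemma summable_norm_gcoef (t : ℝ) : Summable fun m => ‖gcoef t m‖ := by
  apply Summable.even_add_odd
  · refine ((Real.summable_pow_div_factorial (|-t ^ 2 / 2|)).congr fun b => ?_)
    simp [gcoef_even, Real.norm_eq_abs, abs_div, abs_pow, Nat.abs_cast]
  · simpa [gcoef_odd] using summable_zero

lemma summable_norm_exp_series (y : ℝ) : Summable (fun k : ℕ => ‖(y ^ k / k ! : ℝ)‖) := by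
  refine (Real.summable_pow_div_factorial (|y|)).congr fun k => ?_
  simp [Real.norm_eq_abs, abs_div, abs_pow, Nat.abs_cast]

lemma double_fact (b : ℕ) : (2 * b)! = 2 ^ b * b ! * (2 * b - 1)‼ := by
  cases b with
  | zero => simp [Nat.doubleFactorial]
  | succ b' =>
    rw [show 2 * (b' + 1) = (2 * b' + 1) + 1 by ring, Nat.factorial_eq_mul_doubleFactorial,
      show (2 * b' + 1) + 1 = 2 * (b' + 1) by ring, Nat.doubleFactorial_two_mul]
    have : 2 * (b' + 1) - 1 = 2 * b' + 1 := by omega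
    rw [this]

/-- The key coefficient identity: the Cauchy product term equals the Hermite term. -/
lemma hermite_term_eq (x t : ℝ) (n : ℕ) :
    ∑ k ∈ range (n + 1), (x * t) ^ k / k ! * gcoef t (n - k)
      = (aeval x (hermite n)) * t ^ n / n ! := by
  rw [aeval_eq_sum_range' (lt_of_le_of_lt (le_of_eq natDegree_hermite) (Nat.lt_succ_self n)) x,
    Finset.sum_mul, Finset.sum_div]
  refine Finset.sum_congr rfl fun k hk => ?_
  have hkn : k ≤ n := Nat.lt_succ_iff.mp (Finset.mem_range.mp hk)
  by_cases hpar : Even (n - k)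
  · obtain ⟨b, hb⟩ := hpar
    have hb2 : n - k = 2 * b := by omega
    have hn : n = k + 2 * b := by omega
    have hnk : Even (n + k) := by
      rw [Nat.even_add, ← Nat.even_sub hkn]
      exact ⟨b, hb⟩
    have hcoeff : (((hermite n).coeff k : ℤ) : ℝ)
        = (-1) ^ b * ((2 * b - 1)‼ : ℕ) * (n.choose k : ℕ) := by
      rw [coeff_hermite_of_even_add hnk, hb2]
      rw [Nat.mul_div_cancel_left b (by norm_num : 0 < 2)]
      push_cast
      ring
    have hgc : gcoef t (n - k) = (-t ^ 2 / 2) ^ b / b ! := by rw [hb2, gcoef_even]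
    have hfact : (n ! : ℝ) = (n.choose k : ℕ) * (k ! : ℕ) * (2 ^ b * b ! * (2 * b - 1)‼ : ℕ) := by
      rw [← double_fact, ← hb2]
      exact_mod_cast (Nat.choose_mul_factorial_mul_factorial hkn).symm
    rw [hgc, zsmul_eq_mul, hcoeff]
    have htn : t ^ n = t ^ k * t ^ (2 * b) := by rw [hn, pow_add]
    have hneg : (-t ^ 2 / 2) ^ b = (-1 : ℝ) ^ b * t ^ (2 * b) / 2 ^ b := by
      rw [div_pow, neg_pow, ← pow_mul]
    rw [htn, hneg, hfact, mul_pow]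
    push_cast
    have h1 : (k ! : ℝ) ≠ 0 := by positivity
    have h2 : (b ! : ℝ) ≠ 0 := by positivity
    have h3 : ((2 : ℝ) ^ b) ≠ 0 := by positivity
    have h4 : ((n.choose k : ℕ) : ℝ) ≠ 0 := by
      exact_mod_cast Nat.choose_pos hkn |>.ne'
    have h5 : (((2 * b - 1)‼ : ℕ) : ℝ) ≠ 0 := by
      exact_mod_cast (Nat.doubleFactorial_pos _).ne'
    field_simp
  · have hgc : gcoef t (n - k) = 0 := by simp [gcoef, hpar]
    have hodd : Odd (n + k) := by
      rw [← Nat.not_even_iff_odd, Nat.even_add, ← Nat.even_sub hkn]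
      exact hpar
    rw [hgc, coeff_hermite_of_odd_add hodd]
    simp


lemma summable_norm_hermite (x t : ℝ) :
    Summable fun n : ℕ => ‖(aeval x (hermite n) * t ^ n / n ! : ℝ)‖ := by
  have h := summable_norm_sum_mul_range_of_summable_norm
    (f := fun k : ℕ => (x * t) ^ k / k !) (g := gcoef t)
    (summable_norm_exp_series (x * t)) (summable_norm_gcoef t)
  simpa only [hermite_term_eq] using h

lemma tsum_hermite (x t : ℝ) :
    ∑' n : ℕ, aeval x (hermite n) * t ^ n / n ! = Real.exp (x * t - t ^ 2 / 2) := by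
  have h := tsum_mul_tsum_eq_tsum_sum_range_of_summable_norm
    (f := fun k : ℕ => (x * t) ^ k / k !) (g := gcoef t)
    (summable_norm_exp_series (x * t)) (summable_norm_gcoef t)
  rw [(hasSum_exp_div (x * t)).tsum_eq, (hasSum_gcoef t).tsum_eq, ← Real.exp_add] at h
  simp only [hermite_term_eq] at h
  rw [← h]
  congr 1
  ring

lemma gaussianDensity_nonneg (x : ℝ) : 0 ≤ gaussianDensity x := by
  unfold gaussianDensity; positivity

lemma gaussianDensity_sub (u s : ℝ) :
    gaussianDensity (u - s) = gaussianDensity u * Real.exp (u * s - s ^ 2 / 2) := by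
  simp only [gaussianDensity]
  rw [mul_assoc, ← Real.exp_add]
  congr 2
  ring

lemma gaussian_sub_tsum (u s : ℝ) :
    gaussianDensity (u - s)
      = ∑' n : ℕ, aeval u (hermite n) * gaussianDensity u / n ! * s ^ n := by
  rw [gaussianDensity_sub, ← tsum_hermite u s, ← tsum_mul_left]
  exact tsum_congr fun n => by ring

open scoped Interval in
lemma tube_interval (u ρ : ℝ) :
    ∫ s in (0:ℝ)..ρ, gaussianDensity (u - s)
      = ∑' n : ℕ, ρ ^ (n + 1) / ((n + 1)! : ℝ) * (aeval u (hermite n) * gaussianDensity u) := by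
  set c : ℕ → ℝ := fun n => aeval u (hermite n) * gaussianDensity u / n ! with hc
  have hpt : ∀ s : ℝ, gaussianDensity (u - s) = ∑' n : ℕ, c n * s ^ n := fun s =>
    gaussian_sub_tsum u s
  have hcont : ∀ n : ℕ, Continuous fun s : ℝ => c n * s ^ n := fun n =>
    continuous_const.mul (continuous_pow n)
  have hFint : ∀ n : ℕ, Integrable (fun s : ℝ => c n * s ^ n) (volume.restrict (Ι 0 ρ)) :=
    fun n => intervalIntegrable_iff.mp ((hcont n).intervalIntegrable 0 ρ)
  have hV : (volume (Ι (0:ℝ) ρ)).toReal = |ρ| := by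
    rw [Set.uIoc, Real.volume_Ioc,
      ENNReal.toReal_ofReal (sub_nonneg.mpr (min_le_max))]
    rw [max_sub_min_eq_abs]
    simp
  have habs : ∀ s ∈ Ι (0:ℝ) ρ, ∀ n : ℕ, ‖c n * s ^ n‖ ≤ |c n| * |ρ| ^ n := by
    intro s hs n
    rw [Set.uIoc] at hs
    have hsle : |s| ≤ |ρ| := by
      rw [abs_le]
      constructor
      · exact le_trans (le_min (neg_nonpos.mpr (abs_nonneg ρ)) (neg_abs_le ρ)) (le_of_lt hs.1)
      · exact le_trans hs.2 (max_le (abs_nonneg ρ) (le_abs_self ρ))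
    rw [norm_mul, norm_pow, Real.norm_eq_abs, Real.norm_eq_abs]
    exact mul_le_mul_of_nonneg_left (pow_le_pow_left₀ (abs_nonneg s) hsle n) (abs_nonneg _)
  have hsum : Summable fun n : ℕ => ∫ s in Ι (0:ℝ) ρ, ‖c n * s ^ n‖ := by
    refine Summable.of_nonneg_of_le
      (fun n => integral_nonneg fun s => norm_nonneg _)
      (fun n => ?_)
      (((summable_norm_hermite u (|ρ|)).mul_right (gaussianDensity u * |ρ|)))
    have hconst : IntegrableOn (fun _ : ℝ => |c n| * |ρ| ^ n) (Ι (0:ℝ) ρ) volume := by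
      refine integrableOn_const (ne_of_lt ?_)
      rw [Set.uIoc]
      exact measure_Ioc_lt_top
    have hb : ∫ s in Ι (0:ℝ) ρ, ‖c n * s ^ n‖ ≤ (|c n| * |ρ| ^ n) * |ρ| := by
      calc ∫ s in Ι (0:ℝ) ρ, ‖c n * s ^ n‖
          ≤ ∫ _ in Ι (0:ℝ) ρ, |c n| * |ρ| ^ n :=
            setIntegral_mono_on (hFint n).norm hconst
              measurableSet_uIoc (fun s hs => habs s hs n)
        _ = (|c n| * |ρ| ^ n) * |ρ| := by rw [setIntegral_const, smul_eq_mul, measureReal_def, hV, mul_comm]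
    refine hb.trans (le_of_eq ?_)
    simp only [hc]
    simp only [Real.norm_eq_abs, abs_div, abs_mul, abs_pow, abs_abs, Nat.abs_cast,
      abs_of_nonneg (gaussianDensity_nonneg u)]
    ring
  have key := hasSum_integral_of_summable_integral_norm hFint hsum
  calc ∫ s in (0:ℝ)..ρ, gaussianDensity (u - s)
      = ∫ s in (0:ℝ)..ρ, ∑' n : ℕ, c n * s ^ n := by simp only [hpt]
    _ = (if (0:ℝ) ≤ ρ then (1:ℝ) else -1) • ∫ s in Ι (0:ℝ) ρ, ∑' n : ℕ, c n * s ^ n :=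
        intervalIntegral.intervalIntegral_eq_integral_uIoc _ 0 ρ volume
    _ = (if (0:ℝ) ≤ ρ then (1:ℝ) else -1) • ∑' n : ℕ, ∫ s in Ι (0:ℝ) ρ, c n * s ^ n := by
        rw [key.tsum_eq]
    _ = ∑' n : ℕ, (if (0:ℝ) ≤ ρ then (1:ℝ) else -1) • ∫ s in Ι (0:ℝ) ρ, c n * s ^ n := by
        rw [smul_eq_mul, ← tsum_mul_left]
        exact tsum_congr fun n => by rw [smul_eq_mul]
    _ = ∑' n : ℕ, ∫ s in (0:ℝ)..ρ, c n * s ^ n :=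
        tsum_congr fun n =>
          (intervalIntegral.intervalIntegral_eq_integral_uIoc _ 0 ρ volume).symm
    _ = ∑' n : ℕ, ρ ^ (n + 1) / ((n + 1)! : ℝ) * (aeval u (hermite n) * gaussianDensity u) := by
        refine tsum_congr fun n => ?_
        rw [intervalIntegral.integral_const_mul, integral_pow]
        have h1 : ((n + 1)! : ℝ) = (n + 1) * n ! := by exact_mod_cast Nat.factorial_succ n
        have h2 : (n ! : ℝ) ≠ 0 := by positivity
        have h3 : ((n : ℝ) + 1) ≠ 0 := by positivity
        simp only [hc]
        rw [h1, zero_pow (Nat.succ_ne_zero n)]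
        push_cast
        field_simp
        ring

end GaussianTubeAux

/-- the Gaussian tube formula for a half-line: for all real `u` and `ρ`,
`∫_{u-ρ}^∞ φ = ∫_u^∞ φ + Σ_{j=1}^∞ (ρ^j/j!) H_{j-1}(u) φ(u)`, the series converging absolutely.
Here `H_m` is the `m`-th probabilists' Hermite polynomial. -/
theorem gaussian_tube_halfLine (u ρ : ℝ) :
    Summable (fun j : ℕ =>
      |ρ ^ (j + 1) / (Nat.factorial (j + 1) : ℝ) *
        (Polynomial.aeval u (Polynomial.hermite j) * gaussianDensity u)|) ∧
    ∫ t in Ici (u - ρ), gaussianDensity t =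
      (∫ t in Ici u, gaussianDensity t) +
        ∑' j : ℕ, ρ ^ (j + 1) / (Nat.factorial (j + 1) : ℝ) *
          (Polynomial.aeval u (Polynomial.hermite j) * gaussianDensity u) := by
  have hInt : Integrable gaussianDensity := by
    have h := (integrable_exp_neg_mul_sq (by norm_num : (0:ℝ) < 1/2)).const_mul
      ((Real.sqrt (2 * Real.pi))⁻¹)
    have he : (fun x : ℝ => (Real.sqrt (2 * Real.pi))⁻¹ * Real.exp (-(1/2) * x ^ 2))
        = gaussianDensity := by
      funext x; simp only [gaussianDensity]; congr 1; ring
    rwa [he] at h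
  constructor
  · refine Summable.of_nonneg_of_le (fun j => abs_nonneg _) (fun j => ?_)
      ((GaussianTubeAux.summable_norm_hermite u ρ).mul_left (|ρ| * gaussianDensity u))
    have hg := GaussianTubeAux.gaussianDensity_nonneg u
    calc |ρ ^ (j + 1) / (Nat.factorial (j + 1) : ℝ) *
          (Polynomial.aeval u (Polynomial.hermite j) * gaussianDensity u)|
        = (|Polynomial.aeval u (Polynomial.hermite j)| * gaussianDensity u * |ρ| ^ (j + 1))
            / ((j + 1).factorial : ℝ) := by
          rw [abs_mul, abs_div, abs_pow, Nat.abs_cast, abs_mul, abs_of_nonneg hg]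
          ring
      _ ≤ (|Polynomial.aeval u (Polynomial.hermite j)| * gaussianDensity u * |ρ| ^ (j + 1))
            / ((j).factorial : ℝ) := by
          gcongr
          exact Nat.le_succ j
      _ = |ρ| * gaussianDensity u *
            ‖(Polynomial.aeval u (Polynomial.hermite j) * ρ ^ j / (j).factorial : ℝ)‖ := by
          rw [Real.norm_eq_abs, abs_div, abs_mul, abs_pow, Nat.abs_cast]
          ring
  · have h1 : ∀ a : ℝ, ∫ t in Ioi a, gaussianDensity t
        = (∫ t, gaussianDensity t) - ∫ t in Iic a, gaussianDensity t := by
      intro a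
      have h := integral_add_compl (measurableSet_Iic (a := a)) hInt
      rw [compl_Iic] at h
      linarith [h]
    have h3 : (∫ t in Iic u, gaussianDensity t) - ∫ t in Iic (u - ρ), gaussianDensity t
        = ∫ t in (u - ρ)..u, gaussianDensity t :=
      intervalIntegral.integral_Iic_sub_Iic hInt.integrableOn hInt.integrableOn
    have h4 : ∫ t in (u - ρ)..u, gaussianDensity t
        = ∫ s in (0:ℝ)..ρ, gaussianDensity (u - s) := by
      rw [intervalIntegral.integral_comp_sub_left gaussianDensity u]
      norm_num
    rw [integral_Ici_eq_integral_Ioi, integral_Ici_eq_integral_Ioi, h1 (u - ρ), h1 u,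
      ← GaussianTubeAux.tube_interval u ρ, ← h4, ← h3]
    ring
end

section
/- Let a ≤ b be real numbers and let ρ ≥ 0. Then ∫_{a-ρ}^{b+ρ} φ(t) dt = ∫_a^b φ(t) dt + Σ_{j=1}^∞ (ρ^j / j!) · ( (-1)^{j-1} H_{j-1}(b) φ(b) + H_{j-1}(a) φ(a) ), where the series on the right converges absolutely. -/
open MeasureTheory Set

lemma gaussianDensity_pos (x : ℝ) : 0 < gaussianDensity x := by
  unfold gaussianDensity
  positivity

lemma continuous_gaussianDensity : Continuous gaussianDensity := by
  unfold gaussianDensity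
  fun_prop

open Polynomial in
lemma cderiv_gaussian (n : ℕ) :
    iteratedDeriv n (fun w : ℂ => Complex.exp (-(w ^ 2 / 2))) =
      fun z => (-1 : ℂ) ^ n * aeval z (hermite n) * Complex.exp (-(z ^ 2 / 2)) := by
  induction n with
  | zero => funext z; simp
  | succ n ih =>
    funext z
    rw [iteratedDeriv_succ, ih]
    have h1 : HasDerivAt (fun w : ℂ => Complex.exp (-(w ^ 2 / 2)))
        (-z * Complex.exp (-(z ^ 2 / 2))) z := by
      have hp : HasDerivAt (fun w : ℂ => -(w ^ 2 / 2)) (-z) z := by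
        have := ((hasDerivAt_pow 2 z).div_const 2).neg
        rw [show (-z) = -(((2 : ℕ) : ℂ) * z ^ (2 - 1) / 2) by norm_num]
        exact this
      simpa [mul_comm] using hp.cexp
    have h2 : HasDerivAt (fun w : ℂ => (-1 : ℂ) ^ n * aeval w (hermite n))
        ((-1 : ℂ) ^ n * aeval z (derivative (hermite n))) z :=
      ((hermite n).hasDerivAt_aeval z).const_mul ((-1 : ℂ) ^ n)
    have h4 : HasDerivAt (fun w : ℂ => (-1 : ℂ) ^ n * aeval w (hermite n) *
        Complex.exp (-(w ^ 2 / 2))) _ z := h2.mul h1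
    rw [h4.deriv, hermite_succ, map_sub, map_mul, aeval_X, pow_succ]
    ring

open Polynomial in
lemma aeval_complex (x : ℝ) (n : ℕ) :
    aeval (x : ℂ) (hermite n) = ((aeval x (hermite n) : ℝ) : ℂ) :=
  by simpa using Polynomial.aeval_algHom_apply Complex.ofRealHom.toIntAlgHom x (hermite n)

open Polynomial in
/-- Key pointwise expansion : `φ(x+t) = Σ (-t)^n/n! Hₙ(x) φ(x)`. -/
lemma hasSum_gaussian (x t : ℝ) :
    HasSum (fun n : ℕ => (-t) ^ n / (Nat.factorial n : ℝ) *
      (aeval x (hermite n)) * gaussianDensity x)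
      (gaussianDensity (x + t)) := by
  have hdiff : Differentiable ℂ (fun w : ℂ => Complex.exp (-(w ^ 2 / 2))) := by
    fun_prop
  have H := Complex.hasSum_taylorSeries_of_entire hdiff (x : ℂ) ((x : ℂ) + (t : ℂ))
  simp only [cderiv_gaussian] at H
  simp only [add_sub_cancel_left] at H
  have hre : HasSum (fun n : ℕ => (-t) ^ n / (Nat.factorial n : ℝ) *
      (aeval x (hermite n)) * Real.exp (-(x ^ 2 / 2)))
      (Real.exp (-((x + t) ^ 2 / 2))) := by
    rw [← Complex.hasSum_ofReal]
    convert H using 2 with n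
    · rfl
    · push_cast [aeval_complex, Complex.ofReal_exp]
      simp only [smul_eq_mul]
      ring
    · push_cast [Complex.ofReal_exp]
      ring_nf
  have := hre.mul_left ((Real.sqrt (2 * Real.pi))⁻¹)
  unfold gaussianDensity
  convert this using 2 with n
  · rfl
  · rw [neg_div]; ring
  · rw [neg_div]

open intervalIntegral in
lemma integral_pow_mul_const (ρ c : ℝ) (j : ℕ) :
    ∫ s in (0:ℝ)..ρ, s ^ j * ((Nat.factorial j : ℝ)⁻¹ * c)
      = ρ ^ (j + 1) / (Nat.factorial (j + 1) : ℝ) * c := by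
  rw [intervalIntegral.integral_mul_const, integral_pow, Nat.factorial_succ]
  push_cast
  have h0 : (0:ℝ) ^ (j+1) = 0 := by simp
  rw [h0]
  have hj1 : ((j:ℝ) + 1) ≠ 0 := by positivity
  have hjf : (Nat.factorial j : ℝ) ≠ 0 := by positivity
  field_simp
  try ring

open Polynomial in
lemma summable_aux (x r : ℝ) (hr : 0 ≤ r) :
    Summable (fun n : ℕ => r ^ n / (Nat.factorial n : ℝ) *
      |aeval x (hermite n)| * gaussianDensity x) := by
  set R : ℝ := 2 * r + 1 with hR
  have hRpos : (0 : ℝ) < R := by positivity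
  set u : ℕ → ℝ := fun n => (-(-R)) ^ n / (Nat.factorial n : ℝ) *
      (aeval x (hermite n)) * gaussianDensity x with hu
  have hsum : Summable u := (hasSum_gaussian x (-R)).summable
  have htend : Filter.Tendsto u Filter.atTop (nhds 0) := hsum.tendsto_atTop_zero
  have hev : ∀ᶠ n in Filter.atTop, |u n| < 1 := by
    have := NormedAddCommGroup.tendsto_nhds_zero.mp htend 1 one_pos
    simpa [Real.norm_eq_abs] using this
  have habs : ∀ n, |u n| = R ^ n / (Nat.factorial n : ℝ) *
      |aeval x (hermite n)| * gaussianDensity x := by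
    intro n
    rw [hu]
    rw [abs_mul, abs_mul, abs_of_nonneg (gaussianDensity_pos x).le, abs_div, abs_pow]
    rw [abs_of_nonneg (by linarith : (0:ℝ) ≤ -(-R)), Nat.abs_cast, neg_neg]
  apply Summable.of_norm_bounded_eventually_nat (g := fun n => (1 / 2 : ℝ) ^ n)
    summable_geometric_two
  filter_upwards [hev] with n hn
  have hgd := (gaussianDensity_pos x).le
  have hterm_nonneg : 0 ≤ r ^ n / (Nat.factorial n : ℝ) * |aeval x (hermite n)| *
      gaussianDensity x :=
    mul_nonneg (mul_nonneg (by positivity) (abs_nonneg _)) (gaussianDensity_pos x).le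
  rw [Real.norm_eq_abs, abs_of_nonneg hterm_nonneg]
  have hkey : r ^ n / (Nat.factorial n : ℝ) * |aeval x (hermite n)| * gaussianDensity x
      = |u n| * (r / R) ^ n := by
    rw [habs n, div_pow]
    field_simp
  rw [hkey]
  have h1 : (r / R) ^ n ≤ (1 / 2 : ℝ) ^ n := by
    apply pow_le_pow_left₀ (by positivity)
    rw [div_le_div_iff₀ hRpos two_pos]
    linarith
  calc |u n| * (r / R) ^ n ≤ 1 * (1 / 2 : ℝ) ^ n := by
        apply mul_le_mul hn.le h1 (by positivity) zero_le_one
    _ = (1 / 2 : ℝ) ^ n := one_mul _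

open Polynomial in
lemma summable_aux2 (x ρ : ℝ) (hρ : 0 ≤ ρ) :
    Summable (fun j : ℕ => ρ ^ (j + 1) / (Nat.factorial (j + 1) : ℝ) *
      |aeval x (hermite j)| * gaussianDensity x) := by
  apply Summable.of_nonneg_of_le
    (fun j => mul_nonneg (mul_nonneg (by positivity) (abs_nonneg _)) (gaussianDensity_pos x).le)
    (f := fun j => ρ * (ρ ^ j / (Nat.factorial j : ℝ) * |aeval x (hermite j)| *
      gaussianDensity x))
    _ ((summable_aux x ρ hρ).mul_left ρ)
  intro j
  have hfac : (Nat.factorial j : ℝ) ≤ (Nat.factorial (j + 1) : ℝ) := by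
    exact_mod_cast Nat.factorial_le (Nat.le_succ j)
  have hfacpos : (0 : ℝ) < (Nat.factorial j : ℝ) := by positivity
  have h1 : ρ ^ (j + 1) / (Nat.factorial (j + 1) : ℝ) ≤ ρ * (ρ ^ j / (Nat.factorial j : ℝ)) := by
    rw [pow_succ, mul_comm (ρ ^ j) ρ, mul_div_assoc]
    gcongr
  calc ρ ^ (j + 1) / (Nat.factorial (j + 1) : ℝ) * |aeval x (hermite j)| * gaussianDensity x
      ≤ ρ * (ρ ^ j / (Nat.factorial j : ℝ)) * |aeval x (hermite j)| * gaussianDensity x := by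
        apply mul_le_mul_of_nonneg_right _ (gaussianDensity_pos x).le
        exact mul_le_mul_of_nonneg_right h1 (abs_nonneg _)
    _ = ρ * (ρ ^ j / (Nat.factorial j : ℝ) * |aeval x (hermite j)| * gaussianDensity x) := by
        ring

open Polynomial intervalIntegral in
/-- Termwise integration over `[x, x+ρ]`. -/
lemma hasSum_right (x ρ : ℝ) (hρ : 0 ≤ ρ) :
    HasSum (fun j : ℕ => ρ ^ (j + 1) / (Nat.factorial (j + 1) : ℝ) *
      ((-1 : ℝ) ^ j * aeval x (hermite j) * gaussianDensity x))
      (∫ t in x..(x + ρ), gaussianDensity t) := by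
  have hint : (∫ t in x..(x + ρ), gaussianDensity t)
      = ∫ s in Ioc (0:ℝ) ρ, gaussianDensity (x + s) := by
    rw [show (∫ s in Ioc (0:ℝ) ρ, gaussianDensity (x + s))
        = ∫ s in (0:ℝ)..ρ, gaussianDensity (x + s) from
      (intervalIntegral.integral_of_le hρ).symm]
    rw [intervalIntegral.integral_comp_add_left gaussianDensity x]
    norm_num
  set F : ℕ → ℝ → ℝ := fun j s => (-s) ^ j / (Nat.factorial j : ℝ) *
      (aeval x (hermite j)) * gaussianDensity x with hF
  have hFcont : ∀ j, Continuous (F j) := by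
    intro j; rw [hF]; fun_prop
  have hF_int : ∀ j, Integrable (F j) (volume.restrict (Ioc (0:ℝ) ρ)) := fun j =>
    ((hFcont j).integrableOn_Ioc)
  have hnorm : ∀ j, (∫ s in Ioc (0:ℝ) ρ, ‖F j s‖)
      = ρ ^ (j + 1) / (Nat.factorial (j + 1) : ℝ) * |aeval x (hermite j)| *
        gaussianDensity x := by
    intro j
    rw [show (∫ s in Ioc (0:ℝ) ρ, ‖F j s‖) = ∫ s in (0:ℝ)..ρ, ‖F j s‖ from
      (intervalIntegral.integral_of_le hρ).symm]
    have heq : EqOn (fun s => ‖F j s‖)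
        (fun s => s ^ j * ((Nat.factorial j : ℝ)⁻¹ * (|aeval x (hermite j)| *
          gaussianDensity x))) (uIcc (0:ℝ) ρ) := by
      intro s hs
      rw [uIcc_of_le hρ] at hs
      have hs0 : 0 ≤ s := hs.1
      simp only [hF, Real.norm_eq_abs]
      rw [abs_mul, abs_mul, abs_of_nonneg (gaussianDensity_pos x).le, abs_div, abs_pow,
        abs_neg, abs_of_nonneg hs0, Nat.abs_cast]
      ring
    rw [intervalIntegral.integral_congr heq, integral_pow_mul_const]
    try ring
  have hF_sum : Summable (fun j => ∫ s in Ioc (0:ℝ) ρ, ‖F j s‖) := by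
    simp only [hnorm]
    exact summable_aux2 x ρ hρ
  have H := MeasureTheory.hasSum_integral_of_summable_integral_norm hF_int hF_sum
  have htsum : ∀ s : ℝ, (∑' j, F j s) = gaussianDensity (x + s) := fun s =>
    (hasSum_gaussian x s).tsum_eq
  rw [hint]
  have hval : ∀ j, (∫ s in Ioc (0:ℝ) ρ, F j s)
      = ρ ^ (j + 1) / (Nat.factorial (j + 1) : ℝ) *
        ((-1 : ℝ) ^ j * aeval x (hermite j) * gaussianDensity x) := by
    intro j
    rw [show (∫ s in Ioc (0:ℝ) ρ, F j s) = ∫ s in (0:ℝ)..ρ, F j s from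
      (intervalIntegral.integral_of_le hρ).symm]
    have heq : EqOn (F j)
        (fun s => s ^ j * ((Nat.factorial j : ℝ)⁻¹ * ((-1:ℝ) ^ j *
          aeval x (hermite j) * gaussianDensity x))) (uIcc (0:ℝ) ρ) := by
      intro s _
      simp only [hF]
      rw [neg_pow]
      ring
    rw [intervalIntegral.integral_congr heq, integral_pow_mul_const]
    try ring
  have H2 : HasSum (fun j => ρ ^ (j + 1) / (Nat.factorial (j + 1) : ℝ) *
      ((-1 : ℝ) ^ j * aeval x (hermite j) * gaussianDensity x))
      (∫ s in Ioc (0:ℝ) ρ, (∑' j, F j s)) := by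
    have H2 := H
    simp only [hval] at H2
    exact H2
  convert H2 using 1
  exact setIntegral_congr_fun measurableSet_Ioc (fun s _ => (htsum s).symm)

open Polynomial intervalIntegral in
/-- Termwise integration over `[x-ρ, x]`. -/
lemma hasSum_left (x ρ : ℝ) (hρ : 0 ≤ ρ) :
    HasSum (fun j : ℕ => ρ ^ (j + 1) / (Nat.factorial (j + 1) : ℝ) *
      (aeval x (hermite j) * gaussianDensity x))
      (∫ t in (x - ρ)..x, gaussianDensity t) := by
  have hint : (∫ t in (x - ρ)..x, gaussianDensity t)
      = ∫ s in Ioc (0:ℝ) ρ, gaussianDensity (x + -s) := by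
    rw [show (∫ s in Ioc (0:ℝ) ρ, gaussianDensity (x + -s))
        = ∫ s in (0:ℝ)..ρ, gaussianDensity (x - s) from by
      rw [← intervalIntegral.integral_of_le hρ]
      congr 1 with s
      try rw [sub_eq_add_neg]]
    rw [intervalIntegral.integral_comp_sub_left gaussianDensity x]
    norm_num
  set F : ℕ → ℝ → ℝ := fun j s => s ^ j / (Nat.factorial j : ℝ) *
      (aeval x (hermite j)) * gaussianDensity x with hF
  have hFcont : ∀ j, Continuous (F j) := by
    intro j; rw [hF]; fun_prop
  have hF_int : ∀ j, Integrable (F j) (volume.restrict (Ioc (0:ℝ) ρ)) := fun j =>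
    ((hFcont j).integrableOn_Ioc)
  have hnorm : ∀ j, (∫ s in Ioc (0:ℝ) ρ, ‖F j s‖)
      = ρ ^ (j + 1) / (Nat.factorial (j + 1) : ℝ) * |aeval x (hermite j)| *
        gaussianDensity x := by
    intro j
    rw [show (∫ s in Ioc (0:ℝ) ρ, ‖F j s‖) = ∫ s in (0:ℝ)..ρ, ‖F j s‖ from
      (intervalIntegral.integral_of_le hρ).symm]
    have heq : EqOn (fun s => ‖F j s‖)
        (fun s => s ^ j * ((Nat.factorial j : ℝ)⁻¹ * (|aeval x (hermite j)| *
          gaussianDensity x))) (uIcc (0:ℝ) ρ) := by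
      intro s hs
      rw [uIcc_of_le hρ] at hs
      have hs0 : 0 ≤ s := hs.1
      simp only [hF, Real.norm_eq_abs]
      rw [abs_mul, abs_mul, abs_of_nonneg (gaussianDensity_pos x).le, abs_div, abs_pow,
        abs_of_nonneg hs0, Nat.abs_cast]
      ring
    rw [intervalIntegral.integral_congr heq, integral_pow_mul_const]
    try ring
  have hF_sum : Summable (fun j => ∫ s in Ioc (0:ℝ) ρ, ‖F j s‖) := by
    simp only [hnorm]
    exact summable_aux2 x ρ hρ
  have H := MeasureTheory.hasSum_integral_of_summable_integral_norm hF_int hF_sum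
  have htsum : ∀ s : ℝ, (∑' j, F j s) = gaussianDensity (x + -s) := by
    intro s
    have := (hasSum_gaussian x (-s)).tsum_eq
    simpa using this
  rw [hint]
  have hval : ∀ j, (∫ s in Ioc (0:ℝ) ρ, F j s)
      = ρ ^ (j + 1) / (Nat.factorial (j + 1) : ℝ) *
        (aeval x (hermite j) * gaussianDensity x) := by
    intro j
    rw [show (∫ s in Ioc (0:ℝ) ρ, F j s) = ∫ s in (0:ℝ)..ρ, F j s from
      (intervalIntegral.integral_of_le hρ).symm]
    have heq : EqOn (F j)
        (fun s => s ^ j * ((Nat.factorial j : ℝ)⁻¹ *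
          (aeval x (hermite j) * gaussianDensity x))) (uIcc (0:ℝ) ρ) := by
      intro s _
      simp only [hF]
      ring
    rw [intervalIntegral.integral_congr heq, integral_pow_mul_const]
    try ring
  have H2 : HasSum (fun j => ρ ^ (j + 1) / (Nat.factorial (j + 1) : ℝ) *
      (aeval x (hermite j) * gaussianDensity x))
      (∫ s in Ioc (0:ℝ) ρ, (∑' j, F j s)) := by
    have H2 := H
    simp only [hval] at H2
    exact H2
  convert H2 using 1
  exact setIntegral_congr_fun measurableSet_Ioc (fun s _ => (htsum s).symm)

/-- the Gaussian tube formula for a closed interval `[a,b]`: for `a ≤ b` and `ρ ≥ 0`,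
`∫_{a-ρ}^{b+ρ} φ = ∫_a^b φ + Σ_{j=1}^∞ (ρ^j/j!) ((-1)^{j-1} H_{j-1}(b) φ(b) + H_{j-1}(a) φ(a))`,
the series converging absolutely.  `H_m` is the `m`-th probabilists' Hermite polynomial. -/
theorem gaussian_tube_interval (a b ρ : ℝ) (hab : a ≤ b) (hρ : 0 ≤ ρ) :
    Summable (fun j : ℕ =>
      |ρ ^ (j + 1) / (Nat.factorial (j + 1) : ℝ) *
        ((-1 : ℝ) ^ j * (Polynomial.aeval b (Polynomial.hermite j)) * gaussianDensity b +
          (Polynomial.aeval a (Polynomial.hermite j)) * gaussianDensity a)|) ∧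
    ∫ t in Icc (a - ρ) (b + ρ), gaussianDensity t =
      (∫ t in Icc a b, gaussianDensity t) +
        ∑' j : ℕ, ρ ^ (j + 1) / (Nat.factorial (j + 1) : ℝ) *
          ((-1 : ℝ) ^ j * (Polynomial.aeval b (Polynomial.hermite j)) * gaussianDensity b +
            (Polynomial.aeval a (Polynomial.hermite j)) * gaussianDensity a) := by
  have hIcc : ∀ c d : ℝ, c ≤ d →
      (∫ t in Icc c d, gaussianDensity t) = ∫ t in c..d, gaussianDensity t := by
    intro c d h
    rw [intervalIntegral.integral_of_le h, MeasureTheory.integral_Icc_eq_integral_Ioc]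
  have hintble : ∀ c d : ℝ, IntervalIntegrable gaussianDensity volume c d := fun c d =>
    continuous_gaussianDensity.intervalIntegrable c d
  have hsplit : (∫ t in (a - ρ)..(b + ρ), gaussianDensity t)
      = (∫ t in (a - ρ)..a, gaussianDensity t) + (∫ t in a..b, gaussianDensity t)
        + (∫ t in b..(b + ρ), gaussianDensity t) := by
    rw [intervalIntegral.integral_add_adjacent_intervals (hintble _ _) (hintble _ _),
      intervalIntegral.integral_add_adjacent_intervals (hintble _ _) (hintble _ _)]
  have HB := hasSum_right b ρ hρ
  have HA := hasSum_left a ρ hρ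
  have Htot : HasSum (fun j : ℕ => ρ ^ (j + 1) / (Nat.factorial (j + 1) : ℝ) *
      ((-1 : ℝ) ^ j * (Polynomial.aeval b (Polynomial.hermite j)) * gaussianDensity b +
        (Polynomial.aeval a (Polynomial.hermite j)) * gaussianDensity a))
      ((∫ t in b..(b + ρ), gaussianDensity t) + (∫ t in (a - ρ)..a, gaussianDensity t)) := by
    have := HB.add HA
    convert this using 2 with j
    ring
  constructor
  · apply Summable.of_nonneg_of_le (fun j => abs_nonneg _)
      (f := fun j => ρ ^ (j + 1) / (Nat.factorial (j + 1) : ℝ) *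
        |Polynomial.aeval b (Polynomial.hermite j)| * gaussianDensity b
        + ρ ^ (j + 1) / (Nat.factorial (j + 1) : ℝ) *
        |Polynomial.aeval a (Polynomial.hermite j)| * gaussianDensity a)
      _ ((summable_aux2 b ρ hρ).add (summable_aux2 a ρ hρ))
    intro j
    have hc : (0:ℝ) ≤ ρ ^ (j + 1) / (Nat.factorial (j + 1) : ℝ) := by positivity
    set A := (-1 : ℝ) ^ j * (Polynomial.aeval b (Polynomial.hermite j)) * gaussianDensity b
    set B := (Polynomial.aeval a (Polynomial.hermite j)) * gaussianDensity a
    have hA : |A| = |Polynomial.aeval b (Polynomial.hermite j)| * gaussianDensity b := by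
      rw [show A = (-1 : ℝ) ^ j * (Polynomial.aeval b (Polynomial.hermite j)) *
        gaussianDensity b from rfl]
      rw [abs_mul, abs_mul, abs_pow, abs_neg, abs_one, one_pow, one_mul,
        abs_of_nonneg (gaussianDensity_pos b).le]
    have hB : |B| = |Polynomial.aeval a (Polynomial.hermite j)| * gaussianDensity a := by
      rw [show B = (Polynomial.aeval a (Polynomial.hermite j)) * gaussianDensity a from rfl]
      rw [abs_mul, abs_of_nonneg (gaussianDensity_pos a).le]
    calc |ρ ^ (j + 1) / (Nat.factorial (j + 1) : ℝ) * (A + B)|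
        = ρ ^ (j + 1) / (Nat.factorial (j + 1) : ℝ) * |A + B| := by
          rw [abs_mul, abs_of_nonneg hc]
      _ ≤ ρ ^ (j + 1) / (Nat.factorial (j + 1) : ℝ) * (|A| + |B|) :=
          mul_le_mul_of_nonneg_left (abs_add_le _ _) hc
      _ = ρ ^ (j + 1) / (Nat.factorial (j + 1) : ℝ) *
            |Polynomial.aeval b (Polynomial.hermite j)| * gaussianDensity b
          + ρ ^ (j + 1) / (Nat.factorial (j + 1) : ℝ) *
            |Polynomial.aeval a (Polynomial.hermite j)| * gaussianDensity a := by
          rw [hA, hB]; ring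
  · rw [hIcc _ _ (by linarith), hIcc _ _ hab, Htot.tsum_eq, hsplit]
    ring
end
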